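/- For a 2-class M/G/1 queue with 0 < ρ₁, 0 < ρ₂, ρ = ρ₁+ρ₂ < 1, W₀ > 0, and any p₁ ∈ (0, 1/2), setting β = (1-ρp₁)/((2-ρ)p₁) yields β > 1 and W₀/((1-ρ)(1-ρ₂(1-1/β))) = (1-ρp₁)W₀/((1-ρ₁-(1-p₁)ρ₂)(1-ρ₂-p₁ρ₁) - p₁(1-p₁)ρ₁ρ₂), i.e., the DDP and relative priority class-1 mean waiting times coincide. -/

import Mathlib

theorem ddp_relative_priority_equivalence_lower_branch
    (ρ₁ ρ₂ W₀ p₁ : ℝ) (h₁ : 0 < ρ₁) (h₂ : 0 < ρ₂) (hρ : ρ₁ + ρ₂ < 1) (hW : 0 < W₀)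
    (hp : p₁ ∈ Set.Ioo (0 : ℝ) (1 / 2)) :
    let ρ := ρ₁ + ρ₂
    let β := (1 - ρ * p₁) / ((2 - ρ) * p₁)
    1 < β ∧
    W₀ / ((1 - ρ) * (1 - ρ₂ * (1 - 1 / β)))
      = (1 - ρ * p₁) * W₀ /
        ((1 - ρ₁ - (1 - p₁) * ρ₂) * (1 - ρ₂ - p₁ * ρ₁) - p₁ * (1 - p₁) * ρ₁ * ρ₂) := by
  obtain ⟨hp0, hp2⟩ := hp
  intro ρ β
  have hρ0 : 0 < ρ := by positivity
  have hρ1 : ρ < 1 := hρ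
  have hd0 : 0 < (2 - ρ) * p₁ := by nlinarith
  have hn0 : 0 < 1 - ρ * p₁ := by nlinarith
  have hβ1 : 1 < β := by
    rw [lt_div_iff₀ hd0]
    nlinarith
  refine ⟨hβ1, ?_⟩
  have hβpos : 0 < β := lt_trans one_pos hβ1
  have hβne : β ≠ 0 := ne_of_gt hβpos
  have hβval : β = (1 - ρ * p₁) / ((2 - ρ) * p₁) := rfl
  have hkey : 1 - 1 / β = (1 - 2 * p₁) / (1 - ρ * p₁) := by
    rw [hβval, one_div_div]
    field_simp
    ring
  have hE : 1 - ρ₂ * (1 - 1 / β) = (1 - ρ * p₁ - ρ₂ * (1 - 2 * p₁)) / (1 - ρ * p₁) := by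
    rw [hkey, eq_div_iff hn0.ne', sub_mul, mul_assoc, div_mul_cancel₀ _ hn0.ne']; ring
  have hNpos : 0 < 1 - ρ * p₁ - ρ₂ * (1 - 2 * p₁) := by
    have : 1 - ρ * p₁ - ρ₂ * (1 - 2 * p₁) = (1 - ρ₂ - p₁ * ρ₁) + p₁ * ρ₂ := by
      simp only [ρ]; ring
    nlinarith
  have hDval : (1 - ρ₁ - (1 - p₁) * ρ₂) * (1 - ρ₂ - p₁ * ρ₁) - p₁ * (1 - p₁) * ρ₁ * ρ₂
      = (1 - ρ) * (1 - ρ * p₁ - ρ₂ * (1 - 2 * p₁)) := by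
    simp only [ρ]; ring
  rw [hE, hDval]
  have h1ρ : (0:ℝ) < 1 - ρ := by linarith
  field_simp
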